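/- Let G be a connected, irreducible (bull, C4)-free graph with a cut vertex v. Then the neighbourhood of v is a stable (independent) set. -/

import Mathlib

open SimpleGraph

variable {V : Type*}

/-- The bull: a triangle 0,1,2 with pendant vertices 3 (adjacent to 0) and 4 (adjacent to 1). -/
def bullGraph : SimpleGraph (Fin 5) :=
  SimpleGraph.fromRel (fun i j =>
    (i = 0 ∧ j = 1) ∨ (i = 0 ∧ j = 2) ∨ (i = 1 ∧ j = 2) ∨ (i = 0 ∧ j = 3) ∨ (i = 1 ∧ j = 4))

/-- The graph consisting of two independent edges: 0-1 and 2-3. -/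
def twoK2 : SimpleGraph (Fin 4) :=
  SimpleGraph.fromRel (fun i j => (i = 0 ∧ j = 1) ∨ (i = 2 ∧ j = 3))

/-- `G` has no induced subgraph isomorphic to `H`. -/
def IndFree {W : Type*} (H : SimpleGraph W) (G : SimpleGraph V) : Prop :=
  IsEmpty (H ↪g G)

/-- A graph is chordal if it has no induced cycle of length at least 4. -/
def Chordal (G : SimpleGraph V) : Prop :=
  ∀ n : ℕ, 4 ≤ n → IndFree (cycleGraph n) G

/-- A cap on a hole of length `n`: a cycle on `ZMod n` together with an extra vertex
adjacent to exactly the two adjacent hole vertices `0` and `1`. -/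
def capGraph (n : ℕ) : SimpleGraph (Option (ZMod n)) :=
  SimpleGraph.fromRel (fun a b =>
    match a, b with
    | some i, some j => j = i + 1
    | none, some i => i = 0 ∨ i = 1
    | _, _ => False)

/-- `x` dominates `y`: they are adjacent and every neighbour of `y` other than `x`
is a neighbour of `x`. -/
def Dominates (G : SimpleGraph V) (x y : V) : Prop :=
  G.Adj x y ∧ ∀ z, G.Adj y z → z ≠ x → G.Adj x z

/-- A graph is reducible if some vertex dominates an adjacent vertex. -/
def Reducible (G : SimpleGraph V) : Prop :=
  ∃ x y, Dominates G x y

/-- Two adjacent vertices with the same neighbours other than each other. -/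
def TrueTwins (G : SimpleGraph V) (x y : V) : Prop :=
  G.Adj x y ∧ ∀ z, z ≠ x → z ≠ y → (G.Adj x z ↔ G.Adj y z)

/-- A vertex is simplicial if its neighbourhood induces a clique. -/
def Simplicial (G : SimpleGraph V) (v : V) : Prop :=
  G.IsClique (G.neighborSet v)

/-- A universal vertex is adjacent to all other vertices. -/
def Universal (G : SimpleGraph V) (v : V) : Prop :=
  ∀ w, w ≠ v → G.Adj v w

/-- A graph is biconnected if it is connected and remains connected after
deleting any single vertex. -/
def Biconnected (G : SimpleGraph V) : Prop :=
  G.Connected ∧ ∀ v : V, (G.induce ({v}ᶜ : Set V)).Connected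

/-- A basic (cap-free) graph: a chordal graph, or a biconnected triangle-free graph
together with at most one additional vertex adjacent to all other vertices. -/
def IsBasic (G : SimpleGraph V) : Prop :=
  Chordal G ∨ (Biconnected G ∧ G.CliqueFree 3) ∨
    (∃ v : V, Universal G v ∧ Biconnected (G.induce ({v}ᶜ : Set V)) ∧
      (G.induce ({v}ᶜ : Set V)).CliqueFree 3)

/-- A one-point cutset: a vertex whose removal disconnects the graph. -/
def IsCutVertex (G : SimpleGraph V) (v : V) : Prop :=
  ¬ (G.induce ({v}ᶜ : Set V)).Connected

/-- `C` is (the vertex set of) a connected component of `G - v`. -/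
def IsComponentOf (G : SimpleGraph V) (v : V) (C : Set V) : Prop :=
  v ∉ C ∧ C.Nonempty ∧ (G.induce C).Connected ∧
    ∀ x ∈ C, ∀ y, G.Adj x y → y ≠ v → y ∈ C

/-- An amalgam partition `(K, A1, B1, A2, B2)` of `G`. -/
structure IsAmalgamPartition (G : SimpleGraph V) (K A1 B1 A2 B2 : Set V) : Prop where
  partition : ∀ v : V, (v ∈ K ∧ v ∉ A1 ∧ v ∉ B1 ∧ v ∉ A2 ∧ v ∉ B2) ∨
    (v ∉ K ∧ v ∈ A1 ∧ v ∉ B1 ∧ v ∉ A2 ∧ v ∉ B2) ∨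
    (v ∉ K ∧ v ∉ A1 ∧ v ∈ B1 ∧ v ∉ A2 ∧ v ∉ B2) ∨
    (v ∉ K ∧ v ∉ A1 ∧ v ∉ B1 ∧ v ∈ A2 ∧ v ∉ B2) ∨
    (v ∉ K ∧ v ∉ A1 ∧ v ∉ B1 ∧ v ∉ A2 ∧ v ∈ B2)
  A1_nonempty : A1.Nonempty
  A2_nonempty : A2.Nonempty
  K_clique : G.IsClique K
  side1_big : 2 ≤ (A1 ∪ B1).ncard
  side2_big : 2 ≤ (A2 ∪ B2).ncard
  A1A2_complete : ∀ a1 ∈ A1, ∀ a2 ∈ A2, G.Adj a1 a2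
  KA1_complete : ∀ k ∈ K, ∀ a ∈ A1, G.Adj k a
  KA2_complete : ∀ k ∈ K, ∀ a ∈ A2, G.Adj k a
  B1_sep : ∀ b ∈ B1, ∀ x ∈ A2 ∪ B2, ¬ G.Adj b x
  B2_sep : ∀ b ∈ B2, ∀ x ∈ A1 ∪ B1, ¬ G.Adj b x

/-- A clique cover of `G`: a finite family of cliques covering all vertices. -/
def IsCliqueCover (G : SimpleGraph V) (𝒞 : Finset (Set V)) : Prop :=
  (∀ s ∈ 𝒞, G.IsClique s) ∧ ∀ v : V, ∃ s ∈ 𝒞, v ∈ s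

/-- The clique cover number `θ(G)`. -/
noncomputable def cliqueCoverNumber (G : SimpleGraph V) : ℕ :=
  sInf {n : ℕ | ∃ 𝒞 : Finset (Set V), IsCliqueCover G 𝒞 ∧ 𝒞.card = n}

/-- A matching of `G`: a finite set of edges, pairwise vertex-disjoint. -/
def IsMatching' (G : SimpleGraph V) (M : Finset (Sym2 V)) : Prop :=
  (↑M : Set (Sym2 V)) ⊆ G.edgeSet ∧
    ∀ e ∈ M, ∀ f ∈ M, e ≠ f → ∀ v : V, v ∈ e → v ∉ f

/-- The maximum size `m(G)` of a matching of `G`. -/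
noncomputable def matchingNumber (G : SimpleGraph V) : ℕ :=
  sSup {n : ℕ | ∃ M : Finset (Sym2 V), IsMatching' G M ∧ M.card = n}

/-- An asteroidal triple: a stable triple such that between any two of its vertices
there is a path avoiding the closed neighbourhood of the third. -/
def IsAT (G : SimpleGraph V) (x y z : V) : Prop :=
  x ≠ y ∧ y ≠ z ∧ x ≠ z ∧ ¬ G.Adj x y ∧ ¬ G.Adj y z ∧ ¬ G.Adj x z ∧
    (∃ p : G.Walk x y, ∀ w ∈ p.support, w ≠ z ∧ ¬ G.Adj z w) ∧
    (∃ p : G.Walk y z, ∀ w ∈ p.support, w ≠ x ∧ ¬ G.Adj x w) ∧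
    (∃ p : G.Walk x z, ∀ w ∈ p.support, w ≠ y ∧ ¬ G.Adj y w)

def ATFree (G : SimpleGraph V) : Prop := ¬ ∃ x y z : V, IsAT G x y z

lemma bull_elim {G : SimpleGraph V} (hb : IndFree bullGraph G) (x0 x1 x2 x3 x4 : V)
    (e01 : G.Adj x0 x1) (e02 : G.Adj x0 x2) (e12 : G.Adj x1 x2)
    (e03 : G.Adj x0 x3) (e14 : G.Adj x1 x4)
    (n04 : ¬ G.Adj x0 x4) (n13 : ¬ G.Adj x1 x3) (n23 : ¬ G.Adj x2 x3)
    (n24 : ¬ G.Adj x2 x4) (n34 : ¬ G.Adj x3 x4) (d34 : x3 ≠ x4) : False := by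
  have d01 : x0 ≠ x1 := e01.ne
  have d02 : x0 ≠ x2 := e02.ne
  have d12 : x1 ≠ x2 := e12.ne
  have d03 : x0 ≠ x3 := e03.ne
  have d14 : x1 ≠ x4 := e14.ne
  have d04 : x0 ≠ x4 := fun h => n24 (h ▸ e02.symm)
  have d13 : x1 ≠ x3 := fun h => n23 (h ▸ e12.symm)
  have d23 : x2 ≠ x3 := fun h => n13 (h ▸ e12)
  have d24 : x2 ≠ x4 := fun h => n04 (h ▸ e02)
  have s01 := e01.symm
  have s02 := e02.symm
  have s12 := e12.symm
  have s03 := e03.symm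
  have s14 := e14.symm
  have m04 : ¬ G.Adj x4 x0 := fun h => n04 h.symm
  have m13 : ¬ G.Adj x3 x1 := fun h => n13 h.symm
  have m23 : ¬ G.Adj x3 x2 := fun h => n23 h.symm
  have m24 : ¬ G.Adj x4 x2 := fun h => n24 h.symm
  have m34 : ¬ G.Adj x4 x3 := fun h => n34 h.symm
  refine hb.elim ⟨⟨![x0,x1,x2,x3,x4], ?_⟩, ?_⟩
  · intro a b hab
    fin_cases a <;> fin_cases b <;> simp_all
  · intro a b
    show G.Adj (![x0,x1,x2,x3,x4] a) (![x0,x1,x2,x3,x4] b) ↔ _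
    fin_cases a <;> fin_cases b <;> simp_all [bullGraph]

lemma c4_elim {G : SimpleGraph V} (hc : IndFree (SimpleGraph.cycleGraph 4) G) (x0 x1 x2 x3 : V)
    (e01 : G.Adj x0 x1) (e12 : G.Adj x1 x2) (e23 : G.Adj x2 x3) (e03 : G.Adj x0 x3)
    (n02 : ¬ G.Adj x0 x2) (n13 : ¬ G.Adj x1 x3) (d02 : x0 ≠ x2) (d13 : x1 ≠ x3) : False := by
  have d01 : x0 ≠ x1 := e01.ne
  have d12 : x1 ≠ x2 := e12.ne
  have d23 : x2 ≠ x3 := e23.ne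
  have d03 : x0 ≠ x3 := e03.ne
  have s01 := e01.symm
  have s12 := e12.symm
  have s23 := e23.symm
  have s03 := e03.symm
  have m02 : ¬ G.Adj x2 x0 := fun h => n02 h.symm
  have m13 : ¬ G.Adj x3 x1 := fun h => n13 h.symm
  refine hc.elim ⟨⟨![x0,x1,x2,x3], ?_⟩, ?_⟩
  · intro a b hab
    fin_cases a <;> fin_cases b <;> simp_all
  · intro a b
    show G.Adj (![x0,x1,x2,x3] a) (![x0,x1,x2,x3] b) ↔ _
    fin_cases a <;> fin_cases b <;> simp_all [SimpleGraph.cycleGraph_adj] <;> decide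

lemma stmt7_case2 {G : SimpleGraph V} (hb : IndFree bullGraph G)
    (hc : IndFree (SimpleGraph.cycleGraph 4) G)
    (hnd : ∀ a b : V, G.Adj a b → ∃ z, G.Adj b z ∧ z ≠ a ∧ ¬ G.Adj a z)
    {v x y p w : V} {S : Set V}
    (hclos : ∀ s ∈ S, ∀ z, G.Adj s z → z ≠ v → z ∈ S)
    (hwS : w ∉ S) (hxS : x ∈ S)
    (hvx : G.Adj v x) (hvy : G.Adj v y) (hxy : G.Adj x y) (hvw : G.Adj v w)
    (hxp : G.Adj x p) (hpy : p ≠ y) (hyp : ¬ G.Adj y p) (hvp : G.Adj v p) : False := by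
  obtain ⟨a, hxa, hav, hva⟩ := hnd v x hvx
  have hpS : p ∈ S := hclos x hxS p hxp hvp.ne'
  have haS : a ∈ S := hclos x hxS a hxa hav
  have hyS : y ∈ S := hclos x hxS y hxy hvy.ne'
  have hnw : ∀ s ∈ S, ¬ G.Adj s w ∧ s ≠ w := fun s hs =>
    ⟨fun h => hwS (hclos s hs w h hvw.ne'), fun h => hwS (h ▸ hs)⟩
  by_cases hap : G.Adj a p
  · by_cases hay : G.Adj a y
    · exact c4_elim hc a p v y hap hvp.symm hvy hay
        (fun h => hva h.symm) (fun h => hyp h.symm) hav hpy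
    · exact bull_elim hb x v y a w hvx.symm hxy hvy hxa hvw
        (hnw x hxS).1 hva (fun h => hay h.symm) (hnw y hyS).1 (hnw a haS).1 (hnw a haS).2
  · exact bull_elim hb x v p a w hvx.symm hxp hvp hxa hvw
      (hnw x hxS).1 hva (fun h => hap h.symm) (hnw p hpS).1 (hnw a haS).1 (hnw a haS).2

/-- in a connected, irreducible (bull, C4)-free graph, the neighbourhood
of any cut vertex is a stable set. -/
theorem stmt7 (G : SimpleGraph V) (hconn : G.Connected) (hirr : ¬ Reducible G)
    (hb : IndFree bullGraph G) (hc : IndFree (SimpleGraph.cycleGraph 4) G)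
    (v : V) (hv : IsCutVertex G v) :
    ∀ x ∈ G.neighborSet v, ∀ y ∈ G.neighborSet v, ¬ G.Adj x y := by
  intro x hx y hy hxy
  have hvx : G.Adj v x := hx
  have hvy : G.Adj v y := hy
  have hnd : ∀ a b : V, G.Adj a b → ∃ z, G.Adj b z ∧ z ≠ a ∧ ¬ G.Adj a z := by
    intro a b hab
    by_contra hcon
    push_neg at hcon
    exact hirr ⟨a, b, hab, hcon⟩
  have memc : ∀ {u : V}, u ≠ v → u ∈ ({v}ᶜ : Set V) := fun h => by simp [h]
  set H := G.induce ({v}ᶜ : Set V) with hH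
  set S : Set V := {u | ∃ h : u ≠ v, H.Reachable ⟨x, memc hvx.ne'⟩ ⟨u, memc h⟩} with hSdef
  have hclos : ∀ s ∈ S, ∀ z, G.Adj s z → z ≠ v → z ∈ S := by
    intro s hs z hsz hzv
    obtain ⟨hsv, hr⟩ := hs
    refine ⟨hzv, hr.trans (SimpleGraph.Adj.reachable ?_)⟩
    exact hsz
  have hxS : x ∈ S := ⟨hvx.ne', SimpleGraph.Reachable.refl _⟩
  have hw : ∃ w, G.Adj v w ∧ w ∉ S := by
    by_contra hcon
    push_neg at hcon
    apply hv
    rw [SimpleGraph.connected_iff]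
    have key : ∀ (s t : V) (wk : G.Walk s t), t ∈ S → s ≠ v → s ∈ S := by
      intro s t wk
      induction wk with
      | nil => exact fun ht _ => ht
      | @cons u u'' _ h p ih =>
        intro ht hne
        by_cases h2 : u'' = v
        · subst h2
          exact hcon u h.symm
        · exact hclos u'' (ih ht h2) u h.symm hne
    refine ⟨?_, ⟨⟨x, memc hvx.ne'⟩⟩⟩
    intro a b
    have hane : (a : V) ≠ v := by
      simpa only [Set.mem_compl_iff, Set.mem_singleton_iff] using a.2
    have hbne : (b : V) ≠ v := by
      simpa only [Set.mem_compl_iff, Set.mem_singleton_iff] using b.2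
    obtain ⟨wka⟩ := hconn.preconnected (a : V) x
    obtain ⟨wkb⟩ := hconn.preconnected (b : V) x
    obtain ⟨h1, hr1⟩ := key (a : V) x wka hxS hane
    obtain ⟨h2, hr2⟩ := key (b : V) x wkb hxS hbne
    have ea : (⟨(a : V), memc h1⟩ : ({v}ᶜ : Set V)) = a := Subtype.ext rfl
    have eb : (⟨(b : V), memc h2⟩ : ({v}ᶜ : Set V)) = b := Subtype.ext rfl
    rw [ea] at hr1
    rw [eb] at hr2
    exact hr1.symm.trans hr2
  obtain ⟨w, hvw, hwS⟩ := hw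
  obtain ⟨p, hxp, hpy, hyp⟩ := hnd y x hxy.symm
  obtain ⟨q, hyq, hqx, hxq⟩ := hnd x y hxy
  by_cases hvp : G.Adj v p
  · exact stmt7_case2 hb hc hnd hclos hwS hxS hvx hvy hxy hvw hxp hpy hyp hvp
  by_cases hvq : G.Adj v q
  · have hyS : y ∈ S := hclos x hxS y hxy hvy.ne'
    exact stmt7_case2 hb hc hnd hclos hwS hyS hvy hvx hxy.symm hvw hyq hqx hxq hvq
  by_cases hpq : G.Adj p q
  · exact c4_elim hc x p q y hxp hpq hyq.symm hxy
      hxq (fun h => hyp h.symm) hqx.symm hpy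
  · exact bull_elim hb x y v p q hxy hvx.symm hvy.symm hxp hyq
      hxq hyp hvp hvq hpq
      (fun h => hxq (h ▸ hxp))
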